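/- arXiv:1301.4560 — 2 statements merged into one kernel-verified Lean document; each statement's English description precedes it below -/
import Mathlib

section
/- For every ω ∈ ℝ and every y ∈ ℝ³, the function x ↦ Φ(x,y) satisfies the Helmholtz equation ΔₓΦ(x,y) + ω²Φ(x,y) = 0 at every point x ∈ ℝ³ with x ≠ y; that is, Φ(·,y) is annihilated by the operator −Δ−ω² away from the singularity y. -/
noncomputable section

open Real

/-- The Helmholtz fundamental solution `Φ(x,y) = e^{iω‖x−y‖}/(4π‖x−y‖)`. -/
def Phi (ω : ℝ) (x y : EuclideanSpace ℝ (Fin 3)) : ℂ :=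
  Complex.exp (Complex.I * ω * ‖x - y‖) / (4 * Real.pi * ‖x - y‖)

/-- The Laplacian `Δu = ∂₁²u + ∂₂²u + ∂₃²u` of a function `u : ℝ³ → ℂ`. -/
def laplacian3 (u : EuclideanSpace ℝ (Fin 3) → ℂ) (x : EuclideanSpace ℝ (Fin 3)) : ℂ :=
  ∑ j : Fin 3,
    fderiv ℝ (fun z => fderiv ℝ u z (EuclideanSpace.single j 1)) x (EuclideanSpace.single j 1)

namespace HelmAux

abbrev E3 := EuclideanSpace ℝ (Fin 3)

/-- derivative of the shifted norm -/
lemma hasFDerivAt_norm_sub (y z : E3) (h : z ≠ y) :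
    HasFDerivAt (fun w : E3 => ‖w - y‖) (‖z - y‖⁻¹ • innerSL ℝ (z - y)) z := by
  have hv : z - y ≠ 0 := sub_ne_zero.2 h
  have hsub : HasFDerivAt (fun w : E3 => w - y) (ContinuousLinearMap.id ℝ E3) z :=
    (hasFDerivAt_id z).sub_const y
  have hq := hsub.inner ℝ hsub
  have hpos : (inner ℝ (z - y) (z - y) : ℝ) ≠ 0 :=
    fun hc => hv (inner_self_eq_zero.1 hc)
  have hs := (Real.hasDerivAt_sqrt hpos).comp_hasFDerivAt z hq
  have hfun : (fun w : E3 => Real.sqrt (inner ℝ (w - y) (w - y) : ℝ)) =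
      fun w : E3 => ‖w - y‖ := by
    funext w
    rw [real_inner_self_eq_norm_sq, Real.sqrt_sq (norm_nonneg _)]
  simp only [Function.comp_def] at hs
  rw [hfun] at hs
  refine hs.congr_fderiv (Eq.symm ?_)
  ext w
  simp only [ContinuousLinearMap.smul_apply, ContinuousLinearMap.coe_comp', Function.comp_apply,
    ContinuousLinearMap.prod_apply, ContinuousLinearMap.coe_id', id, fderivInnerCLM_apply,
    innerSL_apply_apply, smul_eq_mul]
  rw [real_inner_self_eq_norm_sq, Real.sqrt_sq (norm_nonneg _), real_inner_comm w (z - y)]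
  have : ‖z - y‖ ≠ 0 := norm_ne_zero_iff.2 hv
  field_simp
  ring

/-- `H(t) = e^{iωt}/(4πt)`. -/
def Hf (ω t : ℝ) : ℂ := Complex.exp (Complex.I * ω * t) / (4 * Real.pi * t)

/-- `K(t) = H'(t)/t`. -/
def Kf (ω t : ℝ) : ℂ :=
  Complex.exp (Complex.I * ω * t) * (Complex.I * ω * t - 1) / (4 * Real.pi * t ^ 3)

/-- `K'(t)`. -/
def Kf' (ω t : ℝ) : ℂ :=
  Complex.exp (Complex.I * ω * t) * (-(ω ^ 2 * t ^ 2) - 3 * Complex.I * ω * t + 3) /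
    (4 * Real.pi * t ^ 4)

lemma hasDerivAt_coe (t : ℝ) : HasDerivAt (fun s : ℝ => (s : ℂ)) 1 t := by
  exact (hasDerivAt_id t).ofReal_comp

lemma hasDerivAt_exp (ω t : ℝ) :
    HasDerivAt (fun s : ℝ => Complex.exp (Complex.I * ω * s))
      (Complex.I * ω * Complex.exp (Complex.I * ω * t)) t := by
  have h1 : HasDerivAt (fun s : ℝ => Complex.I * ω * (s : ℂ)) (Complex.I * ω) t := by
    simpa using (hasDerivAt_coe t).const_mul (Complex.I * ω)
  simpa [mul_comm] using h1.cexp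

lemma hasDerivAt_Hf (ω : ℝ) {t : ℝ} (ht : t ≠ 0) :
    HasDerivAt (Hf ω) ((t : ℂ) * Kf ω t) t := by
  have hden : HasDerivAt (fun s : ℝ => (4 * Real.pi * s : ℂ)) (4 * Real.pi) t := by
    simpa using (hasDerivAt_coe t).const_mul (4 * (Real.pi : ℂ))
  have hd0 : (4 * Real.pi * t : ℂ) ≠ 0 := by
    simp [Real.pi_ne_zero, ht]
  have := (hasDerivAt_exp ω t).div hden hd0
  refine this.congr_deriv (Eq.symm ?_)
  have htC : (t : ℂ) ≠ 0 := Complex.ofReal_ne_zero.2 ht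
  have hπ : (Real.pi : ℂ) ≠ 0 := Complex.ofReal_ne_zero.2 Real.pi_ne_zero
  unfold Kf
  field_simp

lemma hasDerivAt_Kf (ω : ℝ) {t : ℝ} (ht : t ≠ 0) :
    HasDerivAt (Kf ω) (Kf' ω t) t := by
  have hnum : HasDerivAt
      (fun s : ℝ => Complex.exp (Complex.I * ω * s) * (Complex.I * ω * s - 1))
      (Complex.I * ω * Complex.exp (Complex.I * ω * t) * (Complex.I * ω * t - 1) +
        Complex.exp (Complex.I * ω * t) * (Complex.I * ω)) t := by
    have h1 : HasDerivAt (fun s : ℝ => (Complex.I * ω * s - 1 : ℂ)) (Complex.I * ω) t := by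
      simpa using ((hasDerivAt_coe t).const_mul (Complex.I * ω)).sub_const 1
    exact (hasDerivAt_exp ω t).mul h1
  have hden : HasDerivAt (fun s : ℝ => (4 * Real.pi * (s : ℂ) ^ 3 : ℂ))
      (4 * Real.pi * (3 * (t : ℂ) ^ 2)) t := by
    have h2 : HasDerivAt (fun s : ℝ => ((s : ℂ)) ^ 3) (3 * (t : ℂ) ^ 2) t := by
      simpa using (hasDerivAt_pow 3 ((t : ℝ) : ℂ)).comp_ofReal
    simpa [mul_assoc] using h2.const_mul (4 * (Real.pi : ℂ))
  have hd0 : (4 * Real.pi * (t : ℂ) ^ 3 : ℂ) ≠ 0 := by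
    have htC : (t : ℂ) ≠ 0 := Complex.ofReal_ne_zero.2 ht
    have hπ : (Real.pi : ℂ) ≠ 0 := Complex.ofReal_ne_zero.2 Real.pi_ne_zero
    exact mul_ne_zero (mul_ne_zero (by norm_num) hπ) (pow_ne_zero _ htC)
  have := hnum.div hden hd0
  refine this.congr_deriv (Eq.symm ?_)
  have htC : (t : ℂ) ≠ 0 := Complex.ofReal_ne_zero.2 ht
  have hπ : (Real.pi : ℂ) ≠ 0 := Complex.ofReal_ne_zero.2 Real.pi_ne_zero
  unfold Kf'
  field_simp
  linear_combination (-((ω:ℂ) ^ 2 * (t:ℂ) ^ 2)) * Complex.I_sq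

end HelmAux

open HelmAux
/-- For every `ω` and `y`, the function `x ↦ Φ(x,y)` satisfies the Helmholtz equation
`ΔₓΦ(x,y) + ω²Φ(x,y) = 0` at every `x ≠ y`. -/
theorem phi_helmholtz (ω : ℝ) (y : EuclideanSpace ℝ (Fin 3))
    (x : EuclideanSpace ℝ (Fin 3)) (hxy : x ≠ y) :
    laplacian3 (fun x => Phi ω x y) x + (ω : ℂ) ^ 2 * Phi ω x y = 0 := by
  classical
  have hvne : x - y ≠ 0 := sub_ne_zero.2 hxy
  have hr : ‖x - y‖ ≠ 0 := norm_ne_zero_iff.2 hvne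
  -- Step 1 : first derivative of `Phi` at any `z ≠ y`
  have key : ∀ z : E3, z ≠ y →
      HasFDerivAt (fun w => Phi ω w y)
        ((ContinuousLinearMap.smulRight (1 : ℝ →L[ℝ] ℝ)
            ((‖z - y‖ : ℂ) * Kf ω ‖z - y‖)).comp
          (‖z - y‖⁻¹ • innerSL ℝ (z - y))) z := by
    intro z hz
    have hz0 : ‖z - y‖ ≠ 0 := norm_ne_zero_iff.2 (sub_ne_zero.2 hz)
    exact (hasDerivAt_Hf ω hz0).hasFDerivAt.comp z (hasFDerivAt_norm_sub y z hz)
  -- Step 2 : explicit formula for the directional derivatives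
  have grad : ∀ (z : E3), z ≠ y → ∀ j : Fin 3,
      fderiv ℝ (fun w => Phi ω w y) z (EuclideanSpace.single j 1) =
        ((z j - y j : ℝ)) • Kf ω ‖z - y‖ := by
    intro z hz j
    have hz0 : ‖z - y‖ ≠ 0 := norm_ne_zero_iff.2 (sub_ne_zero.2 hz)
    rw [(key z hz).fderiv]
    simp only [ContinuousLinearMap.coe_comp', Function.comp_apply,
      ContinuousLinearMap.smul_apply, innerSL_apply_apply,
      ContinuousLinearMap.smulRight_apply, ContinuousLinearMap.one_apply,
      smul_eq_mul]
    have hinner : (inner ℝ (z - y) (EuclideanSpace.single j (1 : ℝ)) : ℝ) = z j - y j := by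
      rw [real_inner_comm]
      simp [EuclideanSpace.inner_single_left]
    rw [hinner, Complex.real_smul, Complex.real_smul]
    have hzC : ((‖z - y‖ : ℝ) : ℂ) ≠ 0 := Complex.ofReal_ne_zero.2 hz0
    push_cast
    field_simp
  -- Step 3 : second directional derivatives
  have second : ∀ j : Fin 3,
      fderiv ℝ (fun z => fderiv ℝ (fun w => Phi ω w y) z (EuclideanSpace.single j 1)) x
          (EuclideanSpace.single j 1) =
        Kf ω ‖x - y‖ + (((x j - y j) ^ 2 * ‖x - y‖⁻¹ : ℝ)) • Kf' ω ‖x - y‖ := by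
    intro j
    have hev : (fun z => fderiv ℝ (fun w => Phi ω w y) z (EuclideanSpace.single j 1)) =ᶠ[nhds x]
        fun z => ((z j - y j : ℝ)) • Kf ω ‖z - y‖ :=
      (eventually_ne_nhds hxy).mono fun z hz => grad z hz j
    rw [hev.fderiv_eq]
    have hc : HasFDerivAt (fun z : E3 => z j - y j)
        (EuclideanSpace.proj j : E3 →L[ℝ] ℝ) x := by
      simpa using (EuclideanSpace.proj j : E3 →L[ℝ] ℝ).hasFDerivAt.sub_const (y j)
    have hf : HasFDerivAt (fun z : E3 => Kf ω ‖z - y‖)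
        ((ContinuousLinearMap.smulRight (1 : ℝ →L[ℝ] ℝ) (Kf' ω ‖x - y‖)).comp
          (‖x - y‖⁻¹ • innerSL ℝ (x - y))) x :=
      by exact (hasDerivAt_Kf ω hr).hasFDerivAt.comp x (hasFDerivAt_norm_sub y x hxy)
    rw [show (fun z : E3 => (z j - y j) • Kf ω ‖z - y‖) = (fun z : E3 => z j - y j) • (fun z : E3 => Kf ω ‖z - y‖) from rfl, (hc.smul hf).fderiv]
    simp only [ContinuousLinearMap.add_apply, ContinuousLinearMap.smul_apply,
      ContinuousLinearMap.coe_comp', Function.comp_apply, innerSL_apply_apply,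
      ContinuousLinearMap.smulRight_apply, ContinuousLinearMap.one_apply, smul_eq_mul]
    have hinner : (inner ℝ (x - y) (EuclideanSpace.single j (1 : ℝ)) : ℝ) = x j - y j := by
      rw [real_inner_comm]
      simp [EuclideanSpace.inner_single_left]
    have hproj : (EuclideanSpace.proj j : E3 →L[ℝ] ℝ) (EuclideanSpace.single j 1) = 1 := by
      simp
    rw [hinner, hproj, one_smul, smul_smul, add_comm]
    congr 1
    ring
  -- Step 4 : summing
  have hsum : ∑ j : Fin 3, (x j - y j) ^ 2 = ‖x - y‖ ^ 2 := by
    rw [EuclideanSpace.norm_eq, Real.sq_sqrt (by positivity)]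
    refine Finset.sum_congr rfl fun j _ => ?_
    rw [Real.norm_eq_abs, sq_abs]
    congr 1
  have hlap : laplacian3 (fun x => Phi ω x y) x =
      3 * Kf ω ‖x - y‖ + (‖x - y‖ : ℝ) • Kf' ω ‖x - y‖ := by
    unfold laplacian3
    rw [Finset.sum_congr rfl fun j _ => second j, Finset.sum_add_distrib]
    rw [← Finset.sum_smul]
    have : ∑ j : Fin 3, (x j - y j) ^ 2 * ‖x - y‖⁻¹ = ‖x - y‖ := by
      rw [← Finset.sum_mul, hsum, sq]
      field_simp
    rw [this]
    simp [Finset.sum_const]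
  rw [hlap]
  -- Step 5 : the Helmholtz ODE identity
  have hPhi : Phi ω x y = Hf ω ‖x - y‖ := rfl
  rw [hPhi, Complex.real_smul]
  have htC : ((‖x - y‖ : ℝ) : ℂ) ≠ 0 := Complex.ofReal_ne_zero.2 hr
  have hπ : (Real.pi : ℂ) ≠ 0 := Complex.ofReal_ne_zero.2 Real.pi_ne_zero
  unfold Hf Kf Kf'
  field_simp
  ring
end
end

section
/- Let ω > 0, let θ ∈ ℝ³ be a unit vector and let y ∈ ℝ³. Then the Helmholtz fundamental solution has the far-field limit lim_{t→+∞} t · e^{−iωt} · Φ(tθ, y) = e^{−iω⟪θ,y⟫}/(4π). (This asymptotic behavior of the kernel along rays underlies passing from the integral representation of the scattered field to its electric far-field pattern.) -/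
noncomputable section

open Real Filter

/-- For `ω > 0`, a unit vector `θ` and `y ∈ ℝ³`, one has the far-field limit
`lim_{t→+∞} t e^{−iωt} Φ(tθ, y) = e^{−iω⟪θ,y⟫}/(4π)`. -/
theorem phi_farfield_limit (ω : ℝ) (hω : 0 < ω)
    (θ y : EuclideanSpace ℝ (Fin 3)) (hθ : ‖θ‖ = 1) :
    Tendsto (fun t : ℝ => (t : ℂ) * Complex.exp (-(Complex.I * ω * t)) * Phi ω (t • θ) y)
      atTop (nhds (Complex.exp (-(Complex.I * ω * (inner ℝ θ y : ℝ))) / (4 * Real.pi))) := by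
  set a : ℝ := (inner ℝ θ y : ℝ) with ha
  -- h t := ‖θ - t⁻¹ • y‖ → 1
  have hy0 : Tendsto (fun t : ℝ => t⁻¹ • y) atTop (nhds (0 : EuclideanSpace ℝ (Fin 3))) := by
    have := (tendsto_inv_atTop_zero (𝕜 := ℝ)).smul_const y
    simpa using this
  have hh : Tendsto (fun t : ℝ => ‖θ - t⁻¹ • y‖) atTop (nhds 1) := by
    have h1 : Tendsto (fun t : ℝ => θ - t⁻¹ • y) atTop (nhds (θ - 0)) :=
      tendsto_const_nhds.sub hy0
    simpa [hθ] using h1.norm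
  have hg : ∀ t : ℝ, 0 < t → ‖t • θ - y‖ = t * ‖θ - t⁻¹ • y‖ := by
    intro t ht
    rw [← norm_smul_of_nonneg ht.le, smul_sub, smul_smul, mul_inv_cancel₀ ht.ne', one_smul]
  have hratio : Tendsto (fun t : ℝ => t / ‖t • θ - y‖) atTop (nhds 1) := by
    have h1 : Tendsto (fun t : ℝ => (‖θ - t⁻¹ • y‖)⁻¹) atTop (nhds 1) := by
      simpa using hh.inv₀ one_ne_zero
    refine h1.congr' ?_
    filter_upwards [eventually_gt_atTop (0:ℝ)] with t ht
    rw [hg t ht, div_mul_cancel_left₀ ht.ne']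
  have hdiff : Tendsto (fun t : ℝ => ‖t • θ - y‖ - t) atTop (nhds (-a)) := by
    have hnum : Tendsto (fun t : ℝ => -2 * a + t⁻¹ * ‖y‖ ^ 2) atTop (nhds (-2 * a)) := by
      have := (tendsto_inv_atTop_zero (𝕜 := ℝ)).mul_const (‖y‖ ^ 2)
      simpa using tendsto_const_nhds.add this
    have hden : Tendsto (fun t : ℝ => ‖θ - t⁻¹ • y‖ + 1) atTop (nhds 2) := by
      have : (2:ℝ) = 1 + 1 := by norm_num
      rw [this]; exact hh.add_const 1
    have hq := hnum.div hden (by norm_num)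
    have hval : (-2 * a) / 2 = -a := by ring
    rw [hval] at hq
    refine hq.congr' ?_
    filter_upwards [eventually_gt_atTop (0:ℝ)] with t ht
    have hpos : 0 < ‖θ - t⁻¹ • y‖ + 1 := by positivity
    show (-2 * a + t⁻¹ * ‖y‖ ^ 2) / (‖θ - t⁻¹ • y‖ + 1) = ‖t • θ - y‖ - t
    rw [div_eq_iff hpos.ne', hg t ht]
    have hsq : ‖θ - t⁻¹ • y‖ ^ 2 = 1 - 2 * t⁻¹ * a + t⁻¹ ^ 2 * ‖y‖ ^ 2 := by
      rw [norm_sub_sq_real, hθ, real_inner_smul_right, norm_smul]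
      rw [Real.norm_eq_abs, abs_of_pos (by positivity)]
      ring
    have h2 : (t * ‖θ - t⁻¹ • y‖ - t) * (‖θ - t⁻¹ • y‖ + 1)
        = t * (‖θ - t⁻¹ • y‖ ^ 2 - 1) := by ring
    rw [h2, hsq]
    field_simp
    ring
  have hexp : Tendsto (fun t : ℝ => Complex.exp (Complex.I * ω * ((‖t • θ - y‖ - t : ℝ) : ℂ)))
      atTop (nhds (Complex.exp (Complex.I * ω * ((-a : ℝ) : ℂ)))) := by
    have h1 : Tendsto (fun t : ℝ => ((‖t • θ - y‖ - t : ℝ) : ℂ)) atTop (nhds ((-a : ℝ) : ℂ)) :=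
      (Complex.continuous_ofReal.tendsto _).comp hdiff
    exact (Complex.continuous_exp.tendsto _).comp (h1.const_mul (Complex.I * ω))
  have hr : Tendsto (fun t : ℝ => ((t / ‖t • θ - y‖ : ℝ) : ℂ)) atTop (nhds 1) := by
    exact (Complex.continuous_ofReal.tendsto _).comp hratio
  have hfin := (hexp.mul hr).div_const (4 * (Real.pi : ℂ))
  have hlim : Complex.exp (Complex.I * ω * ((-a : ℝ) : ℂ)) * 1 / (4 * (Real.pi : ℂ))
      = Complex.exp (-(Complex.I * ω * (a : ℝ))) / (4 * Real.pi) := by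
    push_cast
    ring_nf
  rw [hlim] at hfin
  refine Tendsto.congr' ?_ hfin
  filter_upwards [eventually_gt_atTop (0:ℝ), eventually_gt_atTop ‖y‖] with t ht0 hty
  have hgpos : 0 < ‖t • θ - y‖ := by
    have h1 : ‖t • θ‖ - ‖y‖ ≤ ‖t • θ - y‖ := norm_sub_norm_le _ _
    have h2 : ‖t • θ‖ = t := by
      rw [norm_smul, hθ, Real.norm_eq_abs, abs_of_pos ht0, mul_one]
    linarith
  simp only [Phi]
  have he : Complex.exp (Complex.I * ω * ((‖t • θ - y‖ - t : ℝ) : ℂ))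
      = Complex.exp (-(Complex.I * ω * t)) * Complex.exp (Complex.I * ω * (‖t • θ - y‖ : ℝ)) := by
    rw [← Complex.exp_add]
    congr 1
    push_cast
    ring
  rw [he]
  push_cast
  have h4 : (4 : ℂ) * Real.pi ≠ 0 := by
    simp [Real.pi_ne_zero]
  have hgC : ((‖t • θ - y‖ : ℝ) : ℂ) ≠ 0 := by
    exact_mod_cast hgpos.ne'
  field_simp
end
end
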